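/- If two translation configurations are related by an orthogonal symmetry Q mapping the dipole grid to itself (i.e., Q permutes dipole positions {r_dk} and maps translation vector w to w′ = Qw), then the translation matrix satisfies G_{w′} = (P ⊗ Q) G_w (P ⊗ Q)⁻¹ where P is the permutation of dipole positions induced by Q; hence G_{w′} is similar to G_w and need not be computed separately. -/

import Mathlib

noncomputable section

/-- Euclidean norm of a vector in `ℝ³`. -/
def vecNorm (R : Fin 3 → ℝ) : ℝ := Real.sqrt (∑ i, R i ^ 2)

/-- The scalar prefactor `ψ(R) = −jkη e^{−jkR}/(4πR)` of the free-space dyadic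
Green's function, as a function of the distance `R`. -/
def psiGF (k η R : ℝ) : ℂ :=
  -Complex.I * k * η * Complex.exp (-Complex.I * k * R) / (4 * Real.pi * R)

/-- The free-space dyadic Green's function expressed as a function of the
difference vector `R = r − r′`:
`D = ψ(R)[ I(1 − j/(kR) − 1/(k²R²)) − R̂R̂ᵀ(1 − 3j/(kR) − 3/(k²R²)) ]`. -/
def greenDyadic (k η : ℝ) (R : Fin 3 → ℝ) : Matrix (Fin 3) (Fin 3) ℂ :=
  fun i j =>
    psiGF k η (vecNorm R) *
      ((if i = j then 1 else 0) *
          (1 - Complex.I / (k * vecNorm R) - 1 / (k ^ 2 * vecNorm R ^ 2)) -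
        ((R i / vecNorm R : ℝ) : ℂ) * ((R j / vecNorm R : ℝ) : ℂ) *
          (1 - 3 * Complex.I / (k * vecNorm R) - 3 / (k ^ 2 * vecNorm R ^ 2)))

end

noncomputable section
open Matrix

/-- The translation matrix `G_w` whose 3×3 blocks are
`D(w + r_dl, r_dk) = D-of-difference (w + r_dl − r_dk)` for dipole positions
`r_dk` (source box) and `r_dl` (test box). Row index `(l,i)`, column index `(k,j)`. -/
def translationMatrix (k η : ℝ) {Nd : ℕ} (rd : Fin Nd → (Fin 3 → ℝ))
    (w : Fin 3 → ℝ) : Matrix (Fin Nd × Fin 3) (Fin Nd × Fin 3) ℂ :=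
  fun p q => greenDyadic k η (w + rd p.1 - rd q.1) p.2 q.2

/-- The Kronecker-type similarity matrix `P ⊗ Q` for a permutation `σ` of the
dipole positions and an orthogonal matrix `Q`. -/
def permKron {Nd : ℕ} (σ : Equiv.Perm (Fin Nd)) (Q : Matrix (Fin 3) (Fin 3) ℝ) :
    Matrix (Fin Nd × Fin 3) (Fin Nd × Fin 3) ℂ :=
  fun p q => (if p.1 = σ q.1 then 1 else 0) * ((Q p.2 q.2 : ℝ) : ℂ)

lemma myNormInv (Q : Matrix (Fin 3) (Fin 3) ℝ) (hQ : Qᵀ * Q = 1) (R : Fin 3 → ℝ) :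
    vecNorm (Q.mulVec R) = vecNorm R := by
  have h : Q.mulVec R ⬝ᵥ Q.mulVec R = R ⬝ᵥ R := by
    rw [Matrix.dotProduct_mulVec, Matrix.vecMul_mulVec, hQ, Matrix.vecMul_one]
  unfold vecNorm
  congr 1
  simpa [dotProduct, sq] using h

lemma sum_QQ (Q : Matrix (Fin 3) (Fin 3) ℝ) (hQ : Qᵀ * Q = 1) (i j : Fin 3) :
    ∑ a, (Q i a : ℂ) * (Q j a : ℂ) = if i = j then 1 else 0 := by
  have h := mul_eq_one_comm.mp hQ
  have h2 := congrFun (congrFun h i) j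
  simp only [Matrix.mul_apply, Matrix.one_apply, Matrix.transpose_apply] at h2
  calc ∑ a, (Q i a : ℂ) * (Q j a : ℂ) = ((∑ a, Q i a * Q j a : ℝ) : ℂ) := by push_cast; rfl
    _ = if i = j then 1 else 0 := by rw [h2]; split_ifs <;> simp

lemma greenDyadic_conj (k η : ℝ) (Q : Matrix (Fin 3) (Fin 3) ℝ) (hQ : Qᵀ * Q = 1)
    (R : Fin 3 → ℝ) (i j : Fin 3) :
    greenDyadic k η (Q.mulVec R) i j
      = ∑ a, ∑ b, (Q i a : ℂ) * greenDyadic k η R a b * (Q j b : ℂ) := by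
  have hn : vecNorm (Q.mulVec R) = vecNorm R := myNormInv Q hQ R
  set n := vecNorm R with hn'
  set ψ := psiGF k η n with hψ
  set A : ℂ := 1 - Complex.I / (k * n) - 1 / (k ^ 2 * n ^ 2) with hA
  set B : ℂ := 1 - 3 * Complex.I / (k * n) - 3 / (k ^ 2 * n ^ 2) with hB
  have hmv : ∀ m : Fin 3, ((Q.mulVec R m / n : ℝ) : ℂ) = ∑ a, (Q m a : ℂ) * ((R a / n : ℝ) : ℂ) := by
    intro m
    simp only [Matrix.mulVec, dotProduct, Finset.sum_div]
    push_cast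
    exact Finset.sum_congr rfl fun a _ => by ring
  simp only [greenDyadic, hn, ← hn', ← hψ, ← hA, ← hB]
  rw [hmv i, hmv j]
  have hQQ := sum_QQ Q hQ i j
  simp only [Fin.sum_univ_three] at hQQ ⊢
  simp only [Fin.isValue, reduceIte, show ((1:Fin 3) = 2) = False by decide,
    show ((0:Fin 3) = 1) = False by decide, show ((0:Fin 3) = 2) = False by decide,
    show ((1:Fin 3) = 0) = False by decide, show ((2:Fin 3) = 0) = False by decide,
    show ((2:Fin 3) = 1) = False by decide, if_false]
  linear_combination (-(ψ * A)) * hQQ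


lemma permKron_mul_inv {Nd : ℕ} (σ : Equiv.Perm (Fin Nd)) (Q : Matrix (Fin 3) (Fin 3) ℝ)
    (hQ : Qᵀ * Q = 1) :
    permKron σ Q * permKron σ⁻¹ Qᵀ = 1 := by
  ext p q
  simp only [Matrix.mul_apply, permKron, Fintype.sum_prod_type, Matrix.transpose_apply,
    Matrix.one_apply]
  rw [Finset.sum_comm]
  have : ∀ b : Fin 3, ∑ m : Fin Nd, (if p.1 = σ m then (1:ℂ) else 0) * (Q p.2 b : ℂ) *
      ((if m = σ⁻¹ q.1 then (1:ℂ) else 0) * ((Q q.2 b : ℝ) : ℂ))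
      = (if p.1 = q.1 then (1:ℂ) else 0) * ((Q p.2 b : ℂ) * (Q q.2 b : ℂ)) := by
    intro b
    rw [Finset.sum_eq_single (σ⁻¹ q.1)]
    · have : (p.1 = σ (σ⁻¹ q.1)) ↔ (p.1 = q.1) := by simp
      simp only [if_pos rfl, mul_one]
      split_ifs with ha hb hb
      · ring
      · exact absurd (this.mp ha) hb
      · exact absurd (this.mpr hb) ha
      · ring
    · intro m _ hm; have hm' : m ≠ σ.symm q.1 := hm; simp [hm']
    · simp
  simp only [this, ← Finset.mul_sum, sum_QQ Q hQ]
  by_cases h1 : p.1 = q.1 <;> by_cases h2 : p.2 = q.2 <;>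
    simp [h1, h2, Prod.ext_iff]

lemma permKron_inv_mul {Nd : ℕ} (σ : Equiv.Perm (Fin Nd)) (Q : Matrix (Fin 3) (Fin 3) ℝ)
    (hQ : Qᵀ * Q = 1) :
    permKron σ⁻¹ Qᵀ * permKron σ Q = 1 := by
  have h2 : Qᵀᵀ * Qᵀ = 1 := by rw [Matrix.transpose_transpose, mul_eq_one_comm.mp hQ]
  have := permKron_mul_inv σ⁻¹ Qᵀ h2
  simpa using this

/-- If an orthogonal symmetry `Q` maps the dipole grid to itself via the
permutation `σ` and maps the translation vector `w` to `w′ = Qw`, then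
`G_{w′} = (P ⊗ Q) G_w (P ⊗ Q)⁻¹`: the two translation matrices are similar. -/
theorem translationMatrix_symmetry (k η : ℝ) (hk : 0 < k) (hη : 0 < η)
    {Nd : ℕ} (rd : Fin Nd → (Fin 3 → ℝ)) (w : Fin 3 → ℝ)
    (Q : Matrix (Fin 3) (Fin 3) ℝ) (hQ : Qᵀ * Q = 1)
    (σ : Equiv.Perm (Fin Nd)) (hσ : ∀ l, Q.mulVec (rd l) = rd (σ l))
    (hfar : ∀ l m : Fin Nd, w + rd l - rd m ≠ 0) :
    IsUnit (permKron σ Q) ∧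
    translationMatrix k η rd (Q.mulVec w)
      = permKron σ Q * translationMatrix k η rd w * (permKron σ Q)⁻¹ := by
  have hAB := permKron_mul_inv σ Q hQ
  refine ⟨(Matrix.isUnit_iff_isUnit_det _).mpr (Matrix.isUnit_det_of_right_inverse hAB), ?_⟩
  rw [Matrix.inv_eq_right_inv hAB]
  ext p q
  set G := translationMatrix k η rd w with hG
  have step1 : ∀ s, (∑ r, permKron σ Q p r * G r s)
      = ∑ a, (Q p.2 a : ℂ) * G (σ⁻¹ p.1, a) s := by
    intro s
    rw [Fintype.sum_prod_type, Finset.sum_eq_single (σ⁻¹ p.1)]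
    · simp [permKron]
    · intro l _ hl
      have : ¬ p.1 = σ l := fun h => hl (by rw [h]; simp)
      simp [permKron, this]
    · simp
  have step2 : ∀ (f : Fin Nd × Fin 3 → ℂ),
      (∑ s, f s * permKron σ⁻¹ Qᵀ s q) = ∑ b, f (σ⁻¹ q.1, b) * (Q q.2 b : ℂ) := by
    intro f
    rw [Fintype.sum_prod_type, Finset.sum_eq_single (σ⁻¹ q.1)]
    · simp [permKron]
    · intro m _ hm
      have : ¬ m = σ.symm q.1 := hm
      simp [permKron, this]
    · simp
  have hvec : Q.mulVec (w + rd (σ⁻¹ p.1) - rd (σ⁻¹ q.1)) = Q.mulVec w + rd p.1 - rd q.1 := by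
    rw [Matrix.mulVec_sub, Matrix.mulVec_add, hσ, hσ]
    simp
  simp only [Matrix.mul_apply]
  rw [step2, ]
  simp only [step1]
  have hL : translationMatrix k η rd (Q.mulVec w) p q
      = greenDyadic k η (Q.mulVec (w + rd (σ⁻¹ p.1) - rd (σ⁻¹ q.1))) p.2 q.2 := by
    rw [hvec]; rfl
  rw [hL, greenDyadic_conj k η Q hQ]
  rw [Finset.sum_comm]
  refine Finset.sum_congr rfl fun b _ => ?_
  rw [Finset.sum_mul]
  rfl


end
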